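/- Let C be a binary singly even self-dual code of length n ≡ 0 mod 8, and let S = C_0^⊥ \ C be its shadow. Then every vector in S has weight divisible by 4. -/

import Mathlib

/-- The dual code of a binary linear code. -/
def dualCode {ι : Type*} [Fintype ι] (C : Submodule (ZMod 2) (ι → ZMod 2)) :
    Submodule (ZMod 2) (ι → ZMod 2) where
  carrier := {x | ∀ y ∈ C, ∑ i, x i * y i = 0}
  add_mem' := fun ha hb y hy => by
    simp only [Set.mem_setOf_eq] at *
    simp only [Pi.add_apply, add_mul, Finset.sum_add_distrib, ha y hy, hb y hy, add_zero]
  zero_mem' := fun y hy => by simp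
  smul_mem' := fun c x hx y hy => by
    simp only [Set.mem_setOf_eq] at *
    simp only [Pi.smul_apply, smul_eq_mul, mul_assoc, ← Finset.mul_sum, hx y hy, mul_zero]

/-- The support of a binary vector. -/
def supp {ι : Type*} [Fintype ι] (x : ι → ZMod 2) : Finset ι :=
  Finset.univ.filter fun i => x i ≠ 0

/-- The (Hamming) weight of a binary vector. -/
def wt {ι : Type*} [Fintype ι] (x : ι → ZMod 2) : ℕ := (supp x).card

namespace Stmt12

open Finset

def II : GaussianInt := Zsqrtd.sqrtd

def e (a : ZMod 2) : GaussianInt := if a = 0 then 1 else -1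

lemma zmod2_cases : ∀ a : ZMod 2, a = 0 ∨ a = 1 := by decide
lemma zmod2_add_self : ∀ a : ZMod 2, a + a = 0 := by decide
lemma e_add : ∀ a b : ZMod 2, e (a + b) = e a * e b := by decide
lemma e_zero : e 0 = 1 := by decide
lemma e_one : e 1 = -1 := by decide
lemma e_mul_self : ∀ a : ZMod 2, e a * e a = 1 := by decide

lemma e_sum {α : Type*} (s : Finset α) (f : α → ZMod 2) :
    e (∑ i ∈ s, f i) = ∏ i ∈ s, e (f i) := by
  induction s using Finset.cons_induction with
  | empty => simp [e_zero]
  | cons a s ha ih => rw [Finset.sum_cons, Finset.prod_cons, e_add, ih]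

lemma neg_one_pow_e (m : ℕ) : ((-1 : GaussianInt)) ^ m = e (m : ZMod 2) := by
  induction m with
  | zero => simp [e_zero]
  | succ m ih => rw [pow_succ, ih, Nat.cast_succ, e_add, e_one]

lemma mem_dualCode {ι : Type*} [Fintype ι] (C : Submodule (ZMod 2) (ι → ZMod 2))
    (x : ι → ZMod 2) : x ∈ dualCode C ↔ ∀ y ∈ C, ∑ i, x i * y i = 0 := Iff.rfl

lemma vec_add_self {n : ℕ} (a : Fin n → ZMod 2) : a + a = 0 := by
  funext i; exact zmod2_add_self (a i)

lemma vec_cancel {n : ℕ} (a b : Fin n → ZMod 2) : a + b + b = a := by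
  rw [add_assoc, vec_add_self, add_zero]

lemma B_add_right {n : ℕ} (x a b : Fin n → ZMod 2) :
    ∑ i, x i * (a + b) i = (∑ i, x i * a i) + ∑ i, x i * b i := by
  rw [← Finset.sum_add_distrib]
  exact Finset.sum_congr rfl fun i _ => by simp [mul_add]

lemma B_add_left {n : ℕ} (a b c : Fin n → ZMod 2) :
    ∑ i, (a + b) i * c i = (∑ i, a i * c i) + ∑ i, b i * c i := by
  rw [← Finset.sum_add_distrib]
  exact Finset.sum_congr rfl fun i _ => by simp [add_mul]

lemma B_comm {n : ℕ} (x y : Fin n → ZMod 2) :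
    ∑ i, x i * y i = ∑ i, y i * x i :=
  Finset.sum_congr rfl fun i _ => mul_comm _ _

lemma supp_add {n : ℕ} (a b : Fin n → ZMod 2) :
    supp (a + b) = (supp a ∪ supp b) \ (supp a ∩ supp b) := by
  ext i
  simp only [supp, mem_sdiff, mem_union, mem_inter, mem_filter, mem_univ, true_and, Pi.add_apply]
  rcases zmod2_cases (a i) with h | h <;> rcases zmod2_cases (b i) with h' | h' <;>
    simp [h, h', show (1 : ZMod 2) + 1 = 0 from by decide]

lemma wt_add_eq {n : ℕ} (a b : Fin n → ZMod 2) :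
    wt (a + b) + 2 * (supp a ∩ supp b).card = wt a + wt b := by
  have h1 : (supp a ∩ supp b) ⊆ (supp a ∪ supp b) := inter_subset_union
  have h2 := Finset.card_union_add_card_inter (supp a) (supp b)
  have h3 := Finset.card_sdiff_of_subset h1
  have h4 := Finset.card_le_card h1
  unfold wt
  rw [supp_add, h3]
  omega

lemma card_inter_cast {n : ℕ} (a b : Fin n → ZMod 2) :
    (((supp a ∩ supp b).card : ℕ) : ZMod 2) = ∑ i, a i * b i := by
  have : ∀ i, a i * b i = if i ∈ supp a ∩ supp b then 1 else 0 := by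
    intro i
    simp only [supp, mem_inter, mem_filter, mem_univ, true_and]
    rcases zmod2_cases (a i) with h | h <;> rcases zmod2_cases (b i) with h' | h' <;> simp [h, h']
  rw [Finset.sum_congr rfl (fun i _ => this i), Finset.sum_ite_mem, Finset.univ_inter,
    Finset.sum_const]
  simp

lemma psi_add {n : ℕ} (a b : Fin n → ZMod 2) :
    II ^ wt (a + b) = II ^ wt a * II ^ wt b * e (∑ i, a i * b i) := by
  have hII2 : II ^ 2 = -1 := by decide
  have h := wt_add_eq a b
  have key : II ^ wt a * II ^ wt b * e (∑ i, a i * b i) = II ^ wt (a + b) := by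
    calc II ^ wt a * II ^ wt b * e (∑ i, a i * b i)
        = II ^ (wt a + wt b) * e (∑ i, a i * b i) := by rw [pow_add]
      _ = II ^ (wt (a + b) + 2 * (supp a ∩ supp b).card) * e (∑ i, a i * b i) := by rw [h]
      _ = II ^ wt (a + b) * ((II ^ 2) ^ (supp a ∩ supp b).card * e (∑ i, a i * b i)) := by
          rw [pow_add, pow_mul, mul_assoc]
      _ = II ^ wt (a + b) * (e (((supp a ∩ supp b).card : ℕ) : ZMod 2) * e (∑ i, a i * b i)) := by
          rw [hII2, neg_one_pow_e]
      _ = II ^ wt (a + b) := by rw [card_inter_cast, e_mul_self, mul_one]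
  exact key.symm

lemma pow_of_four_dvd {m : ℕ} (h : 4 ∣ m) : II ^ m = 1 := by
  obtain ⟨q, rfl⟩ := h
  rw [pow_mul]
  norm_num [show II ^ 4 = 1 from by decide]

lemma pow_mod_four (m : ℕ) : II ^ m = II ^ (m % 4) := by
  conv_lhs => rw [← Nat.div_add_mod m 4]
  rw [pow_add, pow_mul, show II ^ 4 = 1 from by decide, one_pow, one_mul]

lemma sum_e_eq_zero {n : ℕ} (M : Submodule (ZMod 2) (Fin n → ZMod 2))
    [DecidablePred (· ∈ M)] (y : Fin n → ZMod 2) (hy : y ∉ dualCode M) :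
    ∑ c ∈ univ.filter (· ∈ M), e (∑ i, y i * c i) = 0 := by
  rw [mem_dualCode] at hy
  push_neg at hy
  obtain ⟨c0, hc0M, hc0⟩ := hy
  have hc1 : ∑ i, y i * c0 i = 1 := (zmod2_cases _).resolve_left hc0
  set S := ∑ c ∈ univ.filter (· ∈ M), e (∑ i, y i * c i) with hS
  have hrw : S = -S := by
    have := Finset.sum_equiv (Equiv.addRight c0)
      (s := univ.filter (· ∈ M)) (t := univ.filter (· ∈ M))
      (f := fun c => e (∑ i, y i * (c + c0) i)) (g := fun c => e (∑ i, y i * c i))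
      (fun c => by
        simp only [mem_filter, mem_univ, true_and, Equiv.coe_addRight]
        constructor
        · intro h; exact M.add_mem h hc0M
        · intro h; have := M.add_mem h hc0M; rwa [vec_cancel] at this)
      (fun c _ => rfl)
    calc S = ∑ c ∈ univ.filter (· ∈ M), e (∑ i, y i * (c + c0) i) := this.symm
      _ = ∑ c ∈ univ.filter (· ∈ M), -e (∑ i, y i * c i) := by
          refine Finset.sum_congr rfl fun c hc => ?_
          rw [B_add_right, e_add, hc1, e_one, mul_neg_one]
      _ = -S := by rw [Finset.sum_neg_distrib]
  have h2 : (2 : GaussianInt) * S = 0 := by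
    rw [two_mul]; nth_rewrite 2 [hrw]; ring
  rcases mul_eq_zero.mp h2 with h | h
  · exact absurd h (by decide)
  · exact h

lemma psi_prod {n : ℕ} (y : Fin n → ZMod 2) :
    II ^ wt y = ∏ j, (if y j ≠ 0 then II else 1) := by
  classical
  rw [Finset.prod_ite (fun _ => II) (fun _ => (1 : GaussianInt)),
    Finset.prod_const, Finset.prod_const, one_pow, mul_one]
  rfl

lemma sum_psi_e {n : ℕ} (c : Fin n → ZMod 2) :
    ∑ y : Fin n → ZMod 2, II ^ wt y * e (∑ i, y i * c i)
      = (1 + II) ^ n * (-II) ^ wt c := by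
  classical
  have step1 : ∀ y : Fin n → ZMod 2,
      II ^ wt y * e (∑ i, y i * c i)
        = ∏ j, ((if y j ≠ 0 then II else 1) * e (y j * c j)) := by
    intro y
    rw [psi_prod, e_sum, ← Finset.prod_mul_distrib]
  rw [Finset.sum_congr rfl (fun y _ => step1 y)]
  have step2 : ∑ y : Fin n → ZMod 2, ∏ j, ((if y j ≠ 0 then II else 1) * e (y j * c j))
      = ∏ j, ∑ v : ZMod 2, ((if v ≠ 0 then II else 1) * e (v * c j)) := by
    rw [Finset.prod_univ_sum (fun _ => univ) (fun j v => (if v ≠ 0 then II else 1) * e (v * c j)),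
      Fintype.piFinset_univ]
  rw [step2]
  have step3 : ∀ j, ∑ v : ZMod 2, ((if v ≠ 0 then II else 1) * e (v * c j))
      = if c j ≠ 0 then 1 - II else 1 + II := by
    intro j
    rw [show (∑ v : ZMod 2, ((if v ≠ 0 then II else 1) * e (v * c j)))
        = (if (0 : ZMod 2) ≠ 0 then II else 1) * e (0 * c j)
          + (if (1 : ZMod 2) ≠ 0 then II else 1) * e (1 * c j) from
      Fin.sum_univ_two _]
    rcases zmod2_cases (c j) with h | h <;>
      simp [h, e_zero, e_one] <;> ring
  rw [Finset.prod_congr rfl (fun j _ => step3 j)]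
  rw [Finset.prod_ite (fun _ => (1 - II)) (fun _ => (1 + II)), Finset.prod_const,
    Finset.prod_const]
  have hwt : (univ.filter fun j => c j ≠ 0).card = wt c := rfl
  have hcompl : (univ.filter fun j => ¬ c j ≠ 0).card = n - wt c := by
    have := Finset.card_filter_add_card_filter_not (s := (univ : Finset (Fin n)))
      (fun j => c j ≠ 0)
    simp only [Finset.card_univ, Fintype.card_fin] at this
    omega
  rw [hwt, hcompl]
  have hle : wt c ≤ n := by
    have := Finset.card_filter_le (univ : Finset (Fin n)) (fun j => c j ≠ 0)
    simpa [wt, supp] using this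
  have hfactor : (1 - II) = (1 + II) * (-II) := by decide
  rw [hfactor, mul_pow, mul_comm ((1 + II) ^ wt c) ((-II) ^ wt c), mul_assoc,
    ← pow_add, Nat.add_sub_cancel' hle, mul_comm]

lemma neg_pow_of_four_dvd {m : ℕ} (h : 4 ∣ m) : (-II) ^ m = 1 := by
  obtain ⟨q, rfl⟩ := h
  rw [pow_mul]
  norm_num [show (-II) ^ 4 = 1 from by decide]

end Stmt12

namespace Stmt12

lemma re_eval (N : ℕ) (z : GaussianInt) : ((N : GaussianInt) * z).re = N * z.re := by
  rw [Zsqrtd.re_mul, Zsqrtd.re_natCast, Zsqrtd.im_natCast]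
  ring

lemma pow16_cast (m : ℕ) : ((16 : GaussianInt)) ^ m = ((16 ^ m : ℕ) : GaussianInt) := by
  push_cast
  ring

end Stmt12

open Finset Stmt12

/-- If `C` is a singly even self-dual code of length `n ≡ 0 (mod 8)` with doubly even
subcode `C0`, then every vector of the shadow `C0^⊥ \ C` has weight divisible by 4. -/
theorem stmt_12 {n : ℕ} (hn : 8 ∣ n)
    (C C0 : Submodule (ZMod 2) (Fin n → ZMod 2))
    (hC : C = dualCode C)
    (hse : ∃ x ∈ C, wt x % 4 = 2)
    (hC0 : (C0 : Set (Fin n → ZMod 2)) = {x | x ∈ C ∧ 4 ∣ wt x}) :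
    ∀ x, x ∈ dualCode C0 → x ∉ C → 4 ∣ wt x := by
  classical
  intro x hxD hxC
  obtain ⟨u, huC, huw⟩ := hse
  obtain ⟨k, hk⟩ := hn
  -- basic membership facts
  have hm0 : ∀ y, y ∈ C0 ↔ y ∈ C ∧ 4 ∣ wt y := by
    intro y
    have := Set.ext_iff.mp hC0 y
    simpa using this
  have hCC : ∀ a ∈ C, ∀ b ∈ C, ∑ i, a i * b i = 0 := by
    intro a ha b hb
    have ha' : a ∈ dualCode C := hC ▸ ha
    exact (mem_dualCode C a).mp ha' b hb
  have hCeven : ∀ a ∈ C, 2 ∣ wt a := by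
    intro a ha
    have h0 : (((supp a ∩ supp a).card : ℕ) : ZMod 2) = 0 := by
      rw [card_inter_cast]; exact hCC a ha a ha
    rw [Finset.inter_self] at h0
    exact (ZMod.natCast_eq_zero_iff _ 2).mp h0
  have hparity : ∀ a ∈ C, ∀ b ∈ C, 2 ∣ (supp a ∩ supp b).card := by
    intro a ha b hb
    have h0 : (((supp a ∩ supp b).card : ℕ) : ZMod 2) = 0 := by
      rw [card_inter_cast]; exact hCC a ha b hb
    exact (ZMod.natCast_eq_zero_iff _ 2).mp h0
  have hpair : ∀ a ∈ C, ∀ b ∈ C, ¬ 4 ∣ wt a → ¬ 4 ∣ wt b → a + b ∈ C0 := by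
    intro a ha b hb h4a h4b
    refine (hm0 _).mpr ⟨C.add_mem ha hb, ?_⟩
    have h := wt_add_eq a b
    have hm := hparity a ha b hb
    have h2a := hCeven a ha
    have h2b := hCeven b hb
    omega
  have hu4 : ¬ 4 ∣ wt u := by omega
  have key1 : ∀ y, y ∈ dualCode C0 → y ∉ C → ∀ c ∈ C, ¬ 4 ∣ wt c →
      ∑ i, y i * c i = 1 := by
    intro y hyD hyC c hcC hc4
    by_contra hne
    have h0 : ∑ i, y i * c i = 0 := (zmod2_cases _).resolve_right hne
    apply hyC
    rw [hC, mem_dualCode]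
    intro c' hc'
    by_cases h4 : 4 ∣ wt c'
    · exact (mem_dualCode C0 y).mp hyD c' ((hm0 c').mpr ⟨hc', h4⟩)
    · have hcc := hpair c' hc' c hcC h4 hc4
      have hy0 : ∑ i, y i * (c' + c) i = 0 := (mem_dualCode C0 y).mp hyD _ hcc
      rw [B_add_right, h0, add_zero] at hy0
      exact hy0
  have hxu : ∑ i, x i * u i = 1 := key1 x hxD hxC u huC hu4
  have hC0subC : ∀ c, c ∈ C0 → c ∈ C := fun c hc => ((hm0 c).mp hc).1
  have hC0D : ∀ c ∈ C0, c ∈ dualCode C0 := by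
    intro c hc
    rw [mem_dualCode]
    intro c' hc'
    exact hCC c (hC0subC c hc) c' (hC0subC c' hc')
  have huD : u ∈ dualCode C0 := by
    rw [mem_dualCode]
    intro c' hc'
    exact hCC u huC c' (hC0subC c' hc')
  have hxC0 : ∀ c ∈ C0, ∑ i, x i * c i = 0 := (mem_dualCode C0 x).mp hxD
  have hsplitC : ∀ c ∈ C, c ∈ C0 ∨ c + u ∈ C0 := by
    intro c hc
    by_cases h4 : 4 ∣ wt c
    · exact Or.inl ((hm0 c).mpr ⟨hc, h4⟩)
    · exact Or.inr (hpair c hc u huC h4 hu4)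
  have hshadow : ∀ y, y ∈ dualCode C0 → y ∉ C → y + x ∈ C := by
    intro y hyD hyC
    rw [hC, mem_dualCode]
    intro c hcC
    rw [B_add_left]
    by_cases h4 : 4 ∣ wt c
    · rw [(mem_dualCode C0 y).mp hyD c ((hm0 c).mpr ⟨hcC, h4⟩),
        hxC0 c ((hm0 c).mpr ⟨hcC, h4⟩), add_zero]
    · rw [key1 y hyD hyC c hcC h4, key1 x hxD hxC c hcC h4]
      decide
  -- finset versions
  set C0F : Finset (Fin n → ZMod 2) := univ.filter (· ∈ C0) with hC0Fdef
  set DF : Finset (Fin n → ZMod 2) := univ.filter (· ∈ dualCode C0) with hDFdef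
  set N : ℕ := C0F.card with hNdef
  have hmemC0F : ∀ y, y ∈ C0F ↔ y ∈ C0 := by
    intro y; simp [hC0Fdef]
  have hmemDF : ∀ y, y ∈ DF ↔ y ∈ dualCode C0 := by
    intro y; simp [hDFdef]
  have hN0 : N ≠ 0 := by
    have : (0 : Fin n → ZMod 2) ∈ C0F := (hmemC0F 0).mpr C0.zero_mem
    intro h
    rw [hNdef, Finset.card_eq_zero] at h
    rw [h] at this
    exact absurd this (Finset.notMem_empty _)
  -- the MacWilliams-type identity : ∑_{y ∈ DF} II^{wt y} = (1+II)^n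
  have hchar : ∀ y : Fin n → ZMod 2,
      (∑ c ∈ C0F, e (∑ i, y i * c i)) = if y ∈ dualCode C0 then (N : GaussianInt) else 0 := by
    intro y
    by_cases hy : y ∈ dualCode C0
    · rw [if_pos hy,
        Finset.sum_congr rfl (fun c hc => by
          rw [(mem_dualCode C0 y).mp hy c ((hmemC0F c).mp hc), e_zero]),
        Finset.sum_const, nsmul_eq_mul, mul_one]
    · rw [if_neg hy]
      exact sum_e_eq_zero C0 y hy
  have hswap : ∑ y : Fin n → ZMod 2, II ^ wt y * (∑ c ∈ C0F, e (∑ i, y i * c i))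
      = (N : GaussianInt) * (1 + II) ^ n := by
    calc ∑ y : Fin n → ZMod 2, II ^ wt y * (∑ c ∈ C0F, e (∑ i, y i * c i))
        = ∑ y : Fin n → ZMod 2, ∑ c ∈ C0F, II ^ wt y * e (∑ i, y i * c i) := by
          exact Finset.sum_congr rfl fun y _ => Finset.mul_sum _ _ _
      _ = ∑ c ∈ C0F, ∑ y : Fin n → ZMod 2, II ^ wt y * e (∑ i, y i * c i) :=
          Finset.sum_comm
      _ = ∑ c ∈ C0F, (1 + II) ^ n * (-II) ^ wt c :=
          Finset.sum_congr rfl fun c _ => sum_psi_e c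
      _ = ∑ c ∈ C0F, (1 + II) ^ n := by
          refine Finset.sum_congr rfl fun c hc => ?_
          rw [neg_pow_of_four_dvd ((hm0 c).mp ((hmemC0F c).mp hc)).2, mul_one]
      _ = (N : GaussianInt) * (1 + II) ^ n := by
          rw [Finset.sum_const, nsmul_eq_mul]
  have hmain : (∑ y ∈ DF, II ^ wt y) = (1 + II) ^ n := by
    have h1 : ∑ y : Fin n → ZMod 2, II ^ wt y * (∑ c ∈ C0F, e (∑ i, y i * c i))
        = (∑ y ∈ DF, II ^ wt y) * (N : GaussianInt) := by
      rw [Finset.sum_congr rfl (fun y (_ : y ∈ univ) => by rw [hchar y, mul_ite, mul_zero]),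
        ← Finset.sum_filter, ← hDFdef, Finset.sum_mul]
    have h2 := h1.symm.trans hswap
    have hNne : ((N : GaussianInt)) ≠ 0 := Nat.cast_ne_zero.mpr hN0
    refine mul_right_cancel₀ hNne ?_
    rw [h2, mul_comm]
  -- the coset decomposition of DF
  have hmemIm : ∀ (t y : Fin n → ZMod 2), y ∈ C0F.image (· + t) ↔ ∃ c ∈ C0, y = c + t := by
    intro t y
    simp only [Finset.mem_image]
    constructor
    · rintro ⟨c, hc, rfl⟩; exact ⟨c, (hmemC0F c).mp hc, rfl⟩
    · rintro ⟨c, hc, rfl⟩; exact ⟨c, (hmemC0F c).mpr hc, rfl⟩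
  have hinj : ∀ (t : Fin n → ZMod 2), ∀ a ∈ C0F, ∀ b ∈ C0F, a + t = b + t → a = b := by
    intro t a _ b _ h
    have := congrArg (· + t) h
    simpa [vec_cancel] using h
  have hdecomp : DF = (C0F ∪ C0F.image (· + u)) ∪ (C0F.image (· + x) ∪ C0F.image (· + (u + x))) := by
    ext y
    rw [hmemDF]
    simp only [Finset.mem_union]
    constructor
    · intro hyD
      by_cases hyC : y ∈ C
      · rcases hsplitC y hyC with h | h
        · exact Or.inl (Or.inl ((hmemC0F y).mpr h))
        · refine Or.inl (Or.inr ((hmemIm u y).mpr ⟨y + u, h, ?_⟩))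
          rw [vec_cancel]
      · have hz : y + x ∈ C := hshadow y hyD hyC
        rcases hsplitC (y + x) hz with h | h
        · refine Or.inr (Or.inl ((hmemIm x y).mpr ⟨y + x, h, ?_⟩))
          rw [vec_cancel]
        · refine Or.inr (Or.inr ((hmemIm (u + x) y).mpr ⟨y + x + u, h, ?_⟩))
          rw [add_assoc (y + x) u (u + x), ← add_assoc u u x, vec_add_self, zero_add,
            vec_cancel]
    · intro h
      rcases h with (h | h) | (h | h)
      · exact hC0D y ((hmemC0F y).mp h)
      · obtain ⟨c, hc, rfl⟩ := (hmemIm u _).mp h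
        exact (dualCode C0).add_mem (hC0D c hc) huD
      · obtain ⟨c, hc, rfl⟩ := (hmemIm x _).mp h
        exact (dualCode C0).add_mem (hC0D c hc) hxD
      · obtain ⟨c, hc, rfl⟩ := (hmemIm (u + x) _).mp h
        exact (dualCode C0).add_mem (hC0D c hc) ((dualCode C0).add_mem huD hxD)
  -- disjointness
  have hu_notC0 : u ∉ C0 := fun h => hu4 ((hm0 u).mp h).2
  have hd1 : Disjoint C0F (C0F.image (· + u)) := by
    rw [Finset.disjoint_left]
    intro y hy hy1
    obtain ⟨c, hc, rfl⟩ := (hmemIm u _).mp hy1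
    apply hu_notC0
    have : c + u + c ∈ C0 := C0.add_mem ((hmemC0F _).mp hy) hc
    rwa [add_comm c u, vec_cancel] at this
  have hd2 : Disjoint (C0F.image (· + x)) (C0F.image (· + (u + x))) := by
    rw [Finset.disjoint_left]
    intro y hy2 hy3
    obtain ⟨c, hc, hceq⟩ := (hmemIm x _).mp hy2
    obtain ⟨c', hc', hceq'⟩ := (hmemIm (u + x) _).mp hy3
    apply hu_notC0
    have heq : c + x = c' + (u + x) := hceq ▸ hceq'
    have hcx : c = c' + u := by
      have h1 := congrArg (· + x) heq
      rwa [vec_cancel, add_assoc c' (u + x) x, vec_cancel] at h1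
    have : c' + c ∈ C0 := C0.add_mem hc' ((hmemC0F c).mp ((hmemC0F c).mpr hc))
    rwa [hcx, ← add_assoc, vec_add_self, zero_add] at this
  have hd3 : Disjoint (C0F ∪ C0F.image (· + u)) (C0F.image (· + x) ∪ C0F.image (· + (u + x))) := by
    rw [Finset.disjoint_left]
    intro y hyL hyR
    have hyC : y ∈ C := by
      rcases Finset.mem_union.mp hyL with h | h
      · exact hC0subC y ((hmemC0F y).mp h)
      · obtain ⟨c, hc, rfl⟩ := (hmemIm u _).mp h
        exact C.add_mem (hC0subC c hc) huC
    apply hxC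
    rcases Finset.mem_union.mp hyR with h | h
    · obtain ⟨c, hc, rfl⟩ := (hmemIm x _).mp h
      have : c + x + c ∈ C := C.add_mem hyC (hC0subC c hc)
      rwa [add_comm c x, vec_cancel] at this
    · obtain ⟨c, hc, rfl⟩ := (hmemIm (u + x) _).mp h
      have h1 : c + (u + x) + c ∈ C := C.add_mem hyC (hC0subC c hc)
      rw [add_comm c (u + x), vec_cancel] at h1
      have h2 : u + x + u ∈ C := C.add_mem h1 huC
      have h3 : u + x + u = x := by
        rw [add_comm u x, add_assoc, vec_add_self, add_zero]
      rwa [h3] at h2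
  -- sums over the four cosets
  have htrans : ∀ t, t ∈ dualCode C0 →
      ∑ c ∈ C0F, II ^ wt (c + t) = (N : GaussianInt) * II ^ wt t := by
    intro t ht
    have hterm : ∀ c ∈ C0F, II ^ wt (c + t) = II ^ wt t := by
      intro c hc
      have hcC0 := (hmemC0F c).mp hc
      rw [psi_add, pow_of_four_dvd ((hm0 c).mp hcC0).2, one_mul, B_comm,
        (mem_dualCode C0 t).mp ht c hcC0, e_zero, mul_one]
    rw [Finset.sum_congr rfl hterm, Finset.sum_const, nsmul_eq_mul]
  have hsum0 : ∑ y ∈ C0F, II ^ wt y = (N : GaussianInt) := by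
    rw [Finset.sum_congr rfl
      (fun c hc => pow_of_four_dvd ((hm0 c).mp ((hmemC0F c).mp hc)).2),
      Finset.sum_const, nsmul_eq_mul, mul_one]
  have hsumIm : ∀ t, t ∈ dualCode C0 →
      ∑ y ∈ C0F.image (· + t), II ^ wt y = (N : GaussianInt) * II ^ wt t := by
    intro t ht
    rw [Finset.sum_image (hinj t)]
    exact htrans t ht
  have hIIu : II ^ wt u = -1 := by
    rw [pow_mod_four, huw]
    decide
  have hIIux : II ^ wt (u + x) = II ^ wt x := by
    rw [psi_add, hIIu, B_comm, hxu, e_one]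
    ring
  have htotal : (1 + II) ^ n = (N : GaussianInt) * (2 * II ^ wt x) := by
    rw [← hmain, hdecomp, Finset.sum_union hd3, Finset.sum_union hd1, Finset.sum_union hd2,
      hsum0, hsumIm u huD, hsumIm x hxD, hsumIm (u + x) ((dualCode C0).add_mem huD hxD),
      hIIu, hIIux]
    ring
  -- endgame
  have hpow16 : (1 + II) ^ n = ((16 : GaussianInt)) ^ k := by
    rw [hk, pow_mul]
    norm_num [show (1 + II) ^ 8 = 16 from by decide]
  have hE : ((16 ^ k : ℕ) : GaussianInt) = (N : GaussianInt) * (2 * II ^ (wt x % 4)) := by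
    rw [← pow16_cast, ← hpow16, htotal, ← pow_mod_four]
  have h16pos : (0 : ℕ) < 16 ^ k := by positivity
  have hr : wt x % 4 = 0 ∨ wt x % 4 = 1 ∨ wt x % 4 = 2 ∨ wt x % 4 = 3 := by omega
  rcases hr with h | h | h | h
  · exact Nat.dvd_of_mod_eq_zero h
  · rw [h] at hE
    have h1 := congrArg Zsqrtd.re hE
    rw [Zsqrtd.re_natCast, re_eval, show (2 * II ^ 1 : GaussianInt).re = 0 from by decide,
      mul_zero] at h1
    exact absurd h1 (by exact_mod_cast h16pos.ne')
  · rw [h] at hE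
    have h1 := congrArg Zsqrtd.re hE
    rw [Zsqrtd.re_natCast, re_eval, show (2 * II ^ 2 : GaussianInt).re = -2 from by decide] at h1
    have hNnn : (0 : ℤ) ≤ (N : ℤ) := Int.natCast_nonneg N
    have hLpos : (0 : ℤ) < ((16 ^ k : ℕ) : ℤ) := by exact_mod_cast h16pos
    nlinarith
  · rw [h] at hE
    have h1 := congrArg Zsqrtd.re hE
    rw [Zsqrtd.re_natCast, re_eval, show (2 * II ^ 3 : GaussianInt).re = 0 from by decide,
      mul_zero] at h1
    exact absurd h1 (by exact_mod_cast h16pos.ne')
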